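/- For h < 0, b > 0, ω = √(2b), τ₀ ∈ ℝ, the principal-value limit lim_{N→∞} ∫_{−Nπ/(2ω)}^{Nπ/(2ω)} (b + 1/(2|h| + (τ−τ₀)²))·sin(2ωτ) dτ = π sin(2ωτ₀) e^{−2ω√(2|h|)}/√(2|h|). -/

import Mathlib

open Real Filter intervalIntegral
open MeasureTheory Set
open scoped FourierTransform

lemma aux_integral_cexp_Ioi {c : ℂ} (hc : c.re < 0) :
    ∫ x : ℝ in Ioi (0:ℝ), Complex.exp (c * x) = -1 / c := by
  have hc0 : c ≠ 0 := fun h => by simp [h] at hc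
  have D : ∀ x : ℝ, HasDerivAt (fun y : ℝ => Complex.exp (c * y) / c)
      (Complex.exp (c * x)) x := by
    intro x
    rw [← mul_div_cancel_right₀ (Complex.exp (c * x)) hc0]
    apply ((Complex.hasDerivAt_exp _).comp x _).div_const c
    simpa only [mul_one, id_eq] using ((hasDerivAt_id (x : ℂ)).const_mul c).comp_ofReal
  have hint : IntegrableOn (fun x : ℝ => Complex.exp (c * x)) (Ioi (0:ℝ)) := by
    refine (exp_neg_integrableOn_Ioi 0 (neg_pos.mpr hc)).mono'
      (Continuous.aestronglyMeasurable (by fun_prop)) ?_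
    filter_upwards with x
    rw [Complex.norm_exp]
    simp [Complex.mul_re, neg_mul]
  have htend : Tendsto (fun x : ℝ => Complex.exp (c * x) / c) atTop (nhds 0) := by
    rw [tendsto_zero_iff_norm_tendsto_zero]
    have heq : (fun x : ℝ => ‖Complex.exp (c * x) / c‖)
        = fun x => Real.exp (c.re * x) / ‖c‖ := by
      ext x
      rw [norm_div, Complex.norm_exp]
      simp [Complex.mul_re]
    rw [heq]
    have h1 : Tendsto (fun x : ℝ => c.re * x) atTop atBot :=
      tendsto_neg_atTop_iff.mp (by
        simpa [neg_mul] using (tendsto_id (α := ℝ)).const_mul_atTop (neg_pos.mpr hc))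
    exact ((Real.tendsto_exp_atBot.comp h1).div_const _).congr (fun x => rfl) |>.mono_right
      (by rw [zero_div])
  have key := integral_Ioi_of_hasDerivAt_of_tendsto' (fun x _ => D x) hint htend
  rw [key]
  simp [neg_div]

lemma aux_integrable_exp_abs {a : ℝ} (ha : 0 < a) :
    Integrable (fun x : ℝ => Real.exp (-(a * |x|))) := by
  have hIoi : IntegrableOn (fun x : ℝ => Real.exp (-(a * |x|))) (Ioi (0:ℝ)) := by
    refine (exp_neg_integrableOn_Ioi 0 ha).congr_fun (fun x hx => ?_) measurableSet_Ioi
    rw [abs_of_pos hx]; simp only [neg_mul]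
  have hIic : IntegrableOn (fun x : ℝ => Real.exp (-(a * |x|))) (Iic (0:ℝ)) := by
    rw [← Measure.map_neg_eq_self (volume : Measure ℝ)]
    have m : MeasurableEmbedding fun x : ℝ => -x := (Homeomorph.neg ℝ).measurableEmbedding
    rw [m.integrableOn_map_iff]
    simp_rw [Function.comp_def, abs_neg, neg_preimage, neg_Iic, neg_zero]
    exact (integrableOn_Ici_iff_integrableOn_Ioi).mpr hIoi
  have h := hIic.union hIoi
  rwa [Iic_union_Ioi, integrableOn_univ] at h

lemma aux_integrable_exp_abs_cplx {a : ℝ} (ha : 0 < a) :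
    Integrable (fun x : ℝ => (Real.exp (-(a * |x|)) : ℂ)) :=
  (aux_integrable_exp_abs ha).ofReal

lemma aux_integrable_inv_sq_add {a : ℝ} (ha : 0 < a) :
    Integrable (fun t : ℝ => (a ^ 2 + t ^ 2)⁻¹) := by
  have h0 : Integrable (fun t : ℝ => (1 + t ^ 2)⁻¹) := integrable_inv_one_add_sq
  have h1 : Integrable (fun t : ℝ => (1 + (a⁻¹ * t) ^ 2)⁻¹) :=
    (integrable_comp_mul_left_iff (fun t : ℝ => (1 + t ^ 2)⁻¹)
      (inv_ne_zero ha.ne')).mpr h0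
  have h2 := h1.const_mul ((a ^ 2)⁻¹)
  refine h2.congr (Filter.Eventually.of_forall fun t => ?_)
  have : a ^ 2 + t ^ 2 = a ^ 2 * (1 + (a⁻¹ * t) ^ 2) := by
    field_simp
  simp only [this, mul_inv]

lemma aux_fourier {a : ℝ} (ha : 0 < a) (w : ℝ) :
    𝓕 (fun x : ℝ => (Real.exp (-(a * |x|)) : ℂ)) w
      = ((2 * a / (a ^ 2 + (2 * π * w) ^ 2) : ℝ) : ℂ) := by
  rw [Real.fourier_real_eq_integral_exp_smul]
  set g : ℝ → ℂ := fun v => Complex.exp (↑(-2 * π * v * w) * Complex.I) •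
    ((Real.exp (-(a * |v|)) : ℝ) : ℂ) with hgdef
  set c₁ : ℂ := -a - (2 * π * w) * Complex.I with hc1
  set c₂ : ℂ := -a + (2 * π * w) * Complex.I with hc2
  have hc1re : c₁.re = -a := by simp [hc1]
  have hc2re : c₂.re = -a := by simp [hc2]
  have hg : Integrable g := by
    refine (aux_integrable_exp_abs ha).mono'
      (Continuous.aestronglyMeasurable (by fun_prop)) ?_
    filter_upwards with x
    rw [hgdef]
    simp only [smul_eq_mul, norm_mul, Complex.norm_exp,
      Complex.norm_real]
    simp [Real.abs_exp, Complex.ofReal_mul]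
  have hIoi : ∫ v in Ioi (0:ℝ), g v = -1 / c₁ := by
    rw [← aux_integral_cexp_Ioi (show c₁.re < 0 by rw [hc1re]; linarith)]
    refine setIntegral_congr_fun measurableSet_Ioi (fun x hx => ?_)
    rw [hgdef]
    simp only [smul_eq_mul]
    rw [abs_of_pos hx, Complex.ofReal_exp, ← Complex.exp_add, hc1]
    congr 1
    push_cast
    ring
  have hIic : ∫ v in Iic (0:ℝ), g v = -1 / c₂ := by
    have h0 : ∫ v in Iic (0:ℝ), g v = ∫ x in Ioi (0:ℝ), g (-x) := by
      rw [integral_comp_neg_Ioi, neg_zero]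
    rw [h0, ← aux_integral_cexp_Ioi (show c₂.re < 0 by rw [hc2re]; linarith)]
    refine setIntegral_congr_fun measurableSet_Ioi (fun x hx => ?_)
    rw [hgdef]
    simp only [smul_eq_mul, abs_neg]
    rw [abs_of_pos hx, Complex.ofReal_exp, ← Complex.exp_add, hc2]
    congr 1
    push_cast
    ring
  rw [← integral_Iic_add_Ioi hg.integrableOn hg.integrableOn, hIoi, hIic]
  have hne : (a : ℂ) ^ 2 + ((2 * π * w : ℝ) : ℂ) ^ 2 ≠ 0 := by
    intro hcon
    have : ((a ^ 2 + (2 * π * w) ^ 2 : ℝ) : ℂ) = 0 := by push_cast; push_cast at hcon; linear_combination hcon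
    rw [Complex.ofReal_eq_zero] at this
    nlinarith [sq_nonneg (2 * π * w), sq_nonneg a]
  have hmul : c₁ * c₂ = ((a ^ 2 + (2 * π * w) ^ 2 : ℝ) : ℂ) := by
    rw [hc1, hc2]
    push_cast
    ring_nf
    rw [Complex.I_sq]
    ring
  have hc1ne : c₁ ≠ 0 := fun hcon => by simp [hcon] at hc1re; linarith
  have hc2ne : c₂ ≠ 0 := fun hcon => by simp [hcon] at hc2re; linarith
  have hsum : c₁ + c₂ = ((-2 * a : ℝ) : ℂ) := by rw [hc1, hc2]; push_cast; ring
  rw [div_add_div _ _ hc2ne hc1ne, mul_comm c₂ c₁, hmul]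
  have hnum : -1 * c₁ + c₂ * -1 = ((2 * a : ℝ) : ℂ) := by
    rw [hc1, hc2]; push_cast; ring
  rw [hnum, ← Complex.ofReal_div]

lemma aux_key {a : ℝ} (ha : 0 < a) (v : ℝ) :
    ∫ t : ℝ, Complex.exp (((t * v : ℝ) : ℂ) * Complex.I) * ((1 / (a ^ 2 + t ^ 2) : ℝ) : ℂ)
      = ((π / a * Real.exp (-(a * |v|)) : ℝ) : ℂ) := by
  set f : ℝ → ℂ := fun x => (Real.exp (-(a * |x|)) : ℂ) with hfdef
  have hf : Integrable f := aux_integrable_exp_abs_cplx ha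
  have hFf : 𝓕 f = fun w : ℝ => ((2 * a / (a ^ 2 + (2 * π * w) ^ 2) : ℝ) : ℂ) :=
    funext (aux_fourier ha)
  have h2pi : (2 * π : ℝ) ≠ 0 := by positivity
  have hFint : Integrable (𝓕 f) := by
    rw [hFf]
    have h1 : Integrable (fun w : ℝ => (a ^ 2 + (2 * π * w) ^ 2)⁻¹) :=
      (integrable_comp_mul_left_iff (fun t : ℝ => (a ^ 2 + t ^ 2)⁻¹) h2pi).mpr
        (aux_integrable_inv_sq_add ha)
    have h2 : Integrable (fun w : ℝ => ((2 * a * (a ^ 2 + (2 * π * w) ^ 2)⁻¹ : ℝ) : ℂ)) :=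
      (h1.const_mul (2 * a)).ofReal
    refine h2.congr (Filter.Eventually.of_forall fun w => ?_)
    simp [div_eq_mul_inv]
  have hcont : Continuous f := by
    apply Complex.continuous_ofReal.comp
    exact Real.continuous_exp.comp (continuous_const.mul continuous_abs).neg
  have hinv := hf.fourierInv_fourier_eq hFint (v := v) hcont.continuousAt
  rw [Real.fourierInv_eq_fourier_neg, hFf,
    Real.fourier_real_eq_integral_exp_smul] at hinv
  set G : ℝ → ℂ := fun t =>
    Complex.exp (((t * v : ℝ) : ℂ) * Complex.I) * ((1 / (a ^ 2 + t ^ 2) : ℝ) : ℂ) with hGdef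
  have hstep : (∫ w : ℝ, Complex.exp (↑(-2 * π * w * -v) * Complex.I) •
      ((2 * a / (a ^ 2 + (2 * π * w) ^ 2) : ℝ) : ℂ))
      = ∫ w : ℝ, ((2 * a : ℝ) : ℂ) * G (2 * π * w) := by
    congr 1
    ext w
    rw [hGdef, smul_eq_mul]
    have e1 : (-2 * π * w * -v : ℝ) = (2 * π * w) * v := by ring
    rw [e1]
    push_cast
    ring
  rw [hstep, MeasureTheory.integral_const_mul,
    MeasureTheory.Measure.integral_comp_mul_left G (2 * π)] at hinv
  have hGval : (∫ t : ℝ, G t) = ((π / a * Real.exp (-(a * |v|)) : ℝ) : ℂ) := by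
    have hsmul : ((2 * a : ℝ) : ℂ) * (|(2 * π : ℝ)⁻¹| • ∫ t : ℝ, G t) = f v := hinv
    rw [abs_of_pos (by positivity : (0:ℝ) < (2 * π : ℝ)⁻¹)] at hsmul
    rw [Complex.real_smul] at hsmul
    have h2a : ((2 * a : ℝ) : ℂ) ≠ 0 := by
      simp only [ne_eq, Complex.ofReal_eq_zero]
      positivity
    have hπc : (((2 * π : ℝ)⁻¹ : ℝ) : ℂ) ≠ 0 := by
      simp only [ne_eq, Complex.ofReal_eq_zero]
      positivity
    have haC : (a : ℂ) ≠ 0 := by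
      simp only [ne_eq, Complex.ofReal_eq_zero]; exact ha.ne'
    have hπC : (π : ℂ) ≠ 0 := by
      simp only [ne_eq, Complex.ofReal_eq_zero]; exact Real.pi_ne_zero
    rw [hfdef] at hsmul
    push_cast at hsmul
    rw [Complex.ofReal_mul, Complex.ofReal_div]
    field_simp at hsmul ⊢
    push_cast
    linear_combination hsmul
  exact hGval

lemma aux_im_helper (θ r : ℝ) :
    (Complex.exp ((θ : ℂ) * Complex.I) * (r : ℂ)).im = Real.sin θ * r := by
  rw [Complex.exp_mul_I]
  simp [add_mul, Complex.sin_ofReal_re, Complex.cos_ofReal_re]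

lemma aux_sin {a k : ℝ} (τ₀ : ℝ) (ha : 0 < a) (hk : 0 < k) :
    ∫ s : ℝ, (1 / (a ^ 2 + s ^ 2)) * Real.sin (k * (s + τ₀))
      = Real.sin (k * τ₀) * (π / a * Real.exp (-(a * k))) := by
  have hkey := aux_key ha k
  rw [abs_of_pos hk] at hkey
  have hden : ∀ t : ℝ, a ^ 2 + t ^ 2 ≠ 0 := fun t => by positivity
  have hH : Integrable (fun t : ℝ =>
      Complex.exp (((k * (t + τ₀) : ℝ) : ℂ) * Complex.I) * ((1 / (a ^ 2 + t ^ 2) : ℝ) : ℂ)) := by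
    refine (aux_integrable_inv_sq_add ha).mono' ?_ ?_
    · refine Continuous.aestronglyMeasurable (Continuous.mul ?_ ?_)
      · exact Complex.continuous_exp.comp (by fun_prop)
      · exact Complex.continuous_ofReal.comp (continuous_const.div (by fun_prop) hden)
    · filter_upwards with t
      simp only [norm_mul, Complex.norm_exp, Complex.norm_real, Real.norm_eq_abs]
      have e1 : ((k * (t + τ₀) : ℝ) : ℂ) * Complex.I
          = Complex.I * ((k * (t + τ₀) : ℝ) : ℂ) := by ring
      rw [e1, Complex.I_mul_re]
      simp only [Complex.ofReal_im, neg_zero, Real.exp_zero, one_mul]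
      rw [abs_of_nonneg (by positivity : (0:ℝ) ≤ 1 / (a ^ 2 + t ^ 2)), one_div]
  have hfun : (fun t : ℝ =>
        Complex.exp (((k * (t + τ₀) : ℝ) : ℂ) * Complex.I) * ((1 / (a ^ 2 + t ^ 2) : ℝ) : ℂ))
      = fun t : ℝ => Complex.exp (((k * τ₀ : ℝ) : ℂ) * Complex.I) *
          (Complex.exp (((t * k : ℝ) : ℂ) * Complex.I) * ((1 / (a ^ 2 + t ^ 2) : ℝ) : ℂ)) := by
    ext t
    rw [← mul_assoc, ← Complex.exp_add]
    congr 2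
    push_cast
    ring
  have hmul : (∫ t : ℝ, Complex.exp (((k * (t + τ₀) : ℝ) : ℂ) * Complex.I) *
        ((1 / (a ^ 2 + t ^ 2) : ℝ) : ℂ))
      = Complex.exp (((k * τ₀ : ℝ) : ℂ) * Complex.I)
          * ((π / a * Real.exp (-(a * k)) : ℝ) : ℂ) := by
    rw [hfun, MeasureTheory.integral_const_mul, hkey]
  have him := integral_im hH
  simp only [RCLike.im_to_complex] at him
  rw [hmul, aux_im_helper] at him
  rw [← him]
  congr 1
  ext t
  rw [aux_im_helper, mul_comm]

/-- Conditional (principal-value) evaluation of the Melnikov integral `I₂ᵃ`: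
`lim_{N→∞} ∫_{−Nπ/(2ω)}^{Nπ/(2ω)} (b + 1/(2|h| + (τ−τ₀)²)) sin(2ωτ) dτ
  = π sin(2ωτ₀) e^{−2ω√(2|h|)}/√(2|h|)` for `h < 0`, `b > 0`, `ω = √(2b)`. -/
theorem stmt10 (h b τ₀ : ℝ) (hh : h < 0) (hb : 0 < b) :
    let ω := Real.sqrt (2 * b)
    Tendsto (fun N : ℕ =>
        ∫ τ in (-(N * π / (2 * ω)))..(N * π / (2 * ω)),
          (b + 1 / (2 * |h| + (τ - τ₀) ^ 2)) * Real.sin (2 * ω * τ))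
      atTop
      (nhds (π * Real.sin (2 * ω * τ₀) * Real.exp (-2 * ω * Real.sqrt (2 * |h|)) /
        Real.sqrt (2 * |h|))) := by
  intro ω
  have hω : 0 < ω := Real.sqrt_pos.mpr (by linarith)
  have habs : 0 < |h| := abs_pos.mpr hh.ne
  have ha : 0 < Real.sqrt (2 * |h|) := Real.sqrt_pos.mpr (by linarith)
  have ha2 : Real.sqrt (2 * |h|) ^ 2 = 2 * |h| := Real.sq_sqrt (by linarith)
  have hden : ∀ τ : ℝ, 0 < 2 * |h| + (τ - τ₀) ^ 2 := fun τ => by positivity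
  set G : ℝ → ℝ := fun τ => 1 / (2 * |h| + (τ - τ₀) ^ 2) * Real.sin (2 * ω * τ) with hGdef
  have hGcont : Continuous G := by
    apply Continuous.mul
    · exact continuous_const.div (by fun_prop) (fun τ => (hden τ).ne')
    · fun_prop
  have hGint : Integrable G := by
    have hbase : Integrable (fun s : ℝ => (Real.sqrt (2 * |h|) ^ 2 + s ^ 2)⁻¹) :=
      aux_integrable_inv_sq_add ha
    have hshift := hbase.comp_sub_right τ₀
    rw [ha2] at hshift
    refine hshift.mono' hGcont.aestronglyMeasurable ?_
    filter_upwards with τ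
    rw [hGdef]
    simp only [norm_mul, Real.norm_eq_abs]
    rw [abs_of_pos (by positivity : (0:ℝ) < 1 / (2 * |h| + (τ - τ₀) ^ 2)), one_div]
    calc (2 * |h| + (τ - τ₀) ^ 2)⁻¹ * |Real.sin (2 * ω * τ)|
        ≤ (2 * |h| + (τ - τ₀) ^ 2)⁻¹ * 1 := by
          gcongr
          exact Real.abs_sin_le_one _
      _ = (2 * |h| + (τ - τ₀) ^ 2)⁻¹ := mul_one _
  have hGval : ∫ τ : ℝ, G τ
      = π * Real.sin (2 * ω * τ₀) * Real.exp (-2 * ω * Real.sqrt (2 * |h|)) /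
          Real.sqrt (2 * |h|) := by
    have hsin := aux_sin (a := Real.sqrt (2 * |h|)) (k := 2 * ω) τ₀ ha (by positivity)
    have htrans := MeasureTheory.integral_sub_right_eq_self (μ := volume)
      (fun s : ℝ => 1 / (Real.sqrt (2 * |h|) ^ 2 + s ^ 2) * Real.sin (2 * ω * (s + τ₀))) τ₀
    have heq : (fun τ : ℝ => 1 / (Real.sqrt (2 * |h|) ^ 2 + (τ - τ₀) ^ 2) *
        Real.sin (2 * ω * (τ - τ₀ + τ₀))) = G := by
      ext τ
      rw [hGdef, ha2, sub_add_cancel]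
    rw [heq] at htrans
    have htrans' : (∫ τ : ℝ, G τ)
        = ∫ x : ℝ, 1 / (Real.sqrt (2 * |h|) ^ 2 + x ^ 2) * Real.sin (2 * ω * (x + τ₀)) := htrans
    rw [htrans', hsin]
    rw [show -(Real.sqrt (2 * |h|) * (2 * ω)) = -2 * ω * Real.sqrt (2 * |h|) by ring]
    field_simp
  have hLtop : Tendsto (fun N : ℕ => (N : ℝ) * π / (2 * ω)) atTop atTop := by
    have h1 : Tendsto (fun N : ℕ => (N : ℝ)) atTop atTop := tendsto_natCast_atTop_atTop
    have h2 := h1.atTop_mul_const (show (0:ℝ) < π / (2 * ω) by positivity)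
    refine h2.congr fun N => ?_
    rw [mul_div_assoc]
  have hLbot : Tendsto (fun N : ℕ => -((N : ℝ) * π / (2 * ω))) atTop atBot :=
    tendsto_neg_atBot_iff.mpr hLtop
  have hconv := MeasureTheory.intervalIntegral_tendsto_integral hGint hLbot hLtop
  rw [hGval] at hconv
  refine hconv.congr fun N => ?_
  have hib : IntervalIntegrable (fun τ : ℝ => b * Real.sin (2 * ω * τ)) volume
      (-((N : ℝ) * π / (2 * ω))) ((N : ℝ) * π / (2 * ω)) := by
    apply Continuous.intervalIntegrable
    fun_prop
  have hiG : IntervalIntegrable G volume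
      (-((N : ℝ) * π / (2 * ω))) ((N : ℝ) * π / (2 * ω)) :=
    hGcont.intervalIntegrable _ _
  have hzero : (∫ τ in (-((N : ℝ) * π / (2 * ω)))..((N : ℝ) * π / (2 * ω)),
      b * Real.sin (2 * ω * τ)) = 0 := by
    rw [intervalIntegral.integral_const_mul]
    have h2ω : (2 * ω : ℝ) ≠ 0 := by positivity
    rw [intervalIntegral.integral_comp_mul_left Real.sin h2ω, integral_sin]
    rw [mul_neg, Real.cos_neg, sub_self, smul_zero, mul_zero]
  calc (∫ τ in (-((N : ℝ) * π / (2 * ω)))..((N : ℝ) * π / (2 * ω)), G τ)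
      = (∫ τ in (-((N : ℝ) * π / (2 * ω)))..((N : ℝ) * π / (2 * ω)),
          b * Real.sin (2 * ω * τ)) + ∫ τ in (-((N : ℝ) * π / (2 * ω)))..((N : ℝ) * π / (2 * ω)),
          G τ := by rw [hzero, zero_add]
    _ = ∫ τ in (-((N : ℝ) * π / (2 * ω)))..((N : ℝ) * π / (2 * ω)),
          (b + 1 / (2 * |h| + (τ - τ₀) ^ 2)) * Real.sin (2 * ω * τ) := by
        rw [← intervalIntegral.integral_add hib hiG]
        apply intervalIntegral.integral_congr
        intro τ _
        rw [hGdef]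
        ring
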